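/- Let ζ be a primitive 42nd root of unity, 𝒪_K the ring of integers of K = ℚ(ζ), and π₁ = −ζ⁸ + ζ⁶ − ζ⁴ + ζ. Then 3ζ⁷ − 8 lies in (π₁)¹² but not in (π₁)¹³, and 3ζ⁷ − 1 lies in (π₁)⁶ but not in (π₁)⁷; that is, v_{(π₁)}(3ζ⁷ − 8) = 12 and v_{(π₁)}(3ζ⁷ − 1) = 6. -/

import Mathlib

open NumberField

theorem valuations_of_elliptic_point_coordinates
    (K : Type*) [Field K] [NumberField K]
    [IsCyclotomicExtension {(42 : ℕ)} ℚ K]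
    (ζ : 𝓞 K) (hζ : IsPrimitiveRoot ζ 42)
    (π₁ : 𝓞 K) (hπ₁ : π₁ = -ζ ^ 8 + ζ ^ 6 - ζ ^ 4 + ζ) :
    (3 * ζ ^ 7 - 8 ∈ Ideal.span {π₁} ^ 12 ∧ 3 * ζ ^ 7 - 8 ∉ Ideal.span {π₁} ^ 13) ∧
    (3 * ζ ^ 7 - 1 ∈ Ideal.span {π₁} ^ 6 ∧ 3 * ζ ^ 7 - 1 ∉ Ideal.span {π₁} ^ 7) := by
  subst hπ₁
  -- basic root-of-unity relations
  have h42 : ζ ^ 42 = 1 := hζ.pow_eq_one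
  have h21 : ζ ^ 21 = -1 := by
    have h2 : ζ ^ 21 * ζ ^ 21 = 1 := by
      rw [← pow_add]; exact h42
    rcases mul_self_eq_one_iff.mp h2 with h | h
    · exact absurd h (hζ.pow_ne_one_of_pos_of_lt (by norm_num) (by norm_num))
    · exact h
  have h14 : ζ ^ 14 - ζ ^ 7 + 1 = 0 := by
    have hne : ζ ^ 7 + 1 ≠ 0 := by
      intro h
      have h14' : ζ ^ 14 = 1 := by linear_combination (ζ ^ 7 - 1) * h
      exact hζ.pow_ne_one_of_pos_of_lt (by norm_num) (by norm_num) h14'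
    have hfac : (-2 : 𝓞 K) * ((ζ ^ 7 + 1) * (ζ ^ 14 - ζ ^ 7 + 1)) = 0 := by
      linear_combination (-2 : 𝓞 K) * h21
    rcases mul_eq_zero.mp hfac with h | h
    · exact absurd h (by norm_num)
    · rcases mul_eq_zero.mp h with h' | h'
      · exact absurd h' hne
      · exact h'
  -- the degree 12 relation Φ₄₂(ζ) = 0
  have hΦ : ζ ^ 12 + ζ ^ 11 - ζ ^ 9 - ζ ^ 8 + ζ ^ 6 - ζ ^ 4 - ζ ^ 3 + ζ + 1 = 0 := by
    have h6 : ζ ^ 2 - ζ + 1 ≠ 0 := by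
      intro h
      have h3 : ζ ^ 6 = 1 := by linear_combination (ζ ^ 4 + ζ ^ 3 - ζ - 1) * h
      exact hζ.pow_ne_one_of_pos_of_lt (by norm_num) (by norm_num) h3
    have hfac : (ζ ^ 2 - ζ + 1) *
        (ζ ^ 12 + ζ ^ 11 - ζ ^ 9 - ζ ^ 8 + ζ ^ 6 - ζ ^ 4 - ζ ^ 3 + ζ + 1) = 0 := by
      linear_combination h14
    rcases mul_eq_zero.mp hfac with h | h
    · exact absurd h h6
    · exact h
  -- certificates
  set c : 𝓞 K := 7 * 1 + 14 * ζ + 12 * ζ^2 - 1 * ζ^3 - 16 * ζ^4 - 18 * ζ^5 - 3 * ζ^6 +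
    12 * ζ^7 + 16 * ζ^8 + 9 * ζ^9 - 2 * ζ^11 with hcdef
  set d : 𝓞 K := 34 * 1 + 31 * ζ - 36 * ζ^2 - 59 * ζ^3 + 9 * ζ^4 + 54 * ζ^5 + 17 * ζ^6 -
    54 * ζ^7 - 43 * ζ^8 + 25 * ζ^9 + 36 * ζ^10 + 3 * ζ^11 with hddef
  have hc : 3 * ζ ^ 7 - 1 = (-ζ ^ 8 + ζ ^ 6 - ζ ^ 4 + ζ) ^ 6 * c := by
    rw [hcdef]
    linear_combination (-1 : 𝓞 K) * (1 * 1 - 1 * ζ + 1 * ζ^2 + 7 * ζ^6 + 5 * ζ^7 + 7 * ζ^8 - 43 * ζ^9 -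
      45 * ζ^10 + 9 * ζ^11 + 140 * ζ^12 + 115 * ζ^13 - 148 * ζ^14 - 364 * ζ^15 - 63 * ζ^16 +
      528 * ζ^17 + 576 * ζ^18 - 387 * ζ^19 - 1086 * ζ^20 - 251 * ζ^21 + 1251 * ζ^22 +
      1140 * ζ^23 - 805 * ζ^24 - 1825 * ζ^25 - 104 * ζ^26 + 1864 * ζ^27 + 1084 * ζ^28 -
      1288 * ζ^29 - 1645 * ζ^30 + 443 * ζ^31 + 1618 * ζ^32 + 256 * ζ^33 - 1154 * ζ^34 -
      601 * ζ^35 + 611 * ζ^36 + 601 * ζ^37 - 229 * ζ^38 - 420 * ζ^39 + 50 * ζ^40 +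
      214 * ζ^41 + 1 * ζ^42 - 79 * ζ^43 - 5 * ζ^44 + 19 * ζ^45 + 2 * ζ^46 - 2 * ζ^47) * hΦ
  have hdc : c * d = 1 := by
    rw [hcdef, hddef]
    linear_combination (237 * 1 + 456 * ζ + 134 * ζ^2 - 476 * ζ^3 - 601 * ζ^4 - 85 * ζ^5 +
      464 * ζ^6 + 409 * ζ^7 + 43 * ζ^8 - 66 * ζ^9 - 6 * ζ^10) * hΦ
  have hB2 : 3 * ζ ^ 7 - 8 = (3 * ζ ^ 7 - 1) ^ 2 := by linear_combination (-9 : 𝓞 K) * h14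
  have hπne : (-ζ ^ 8 + ζ ^ 6 - ζ ^ 4 + ζ) ≠ 0 := by
    intro h
    have hb : 3 * ζ ^ 7 - 1 = 0 := by rw [hc, h]; ring
    have h7 : (7 : 𝓞 K) = 0 := by
      linear_combination (2 - 3 * ζ ^ 7) * hb + 9 * h14
    exact (by norm_num : (7 : 𝓞 K) ≠ 0) h7
  -- key lemma: π₁ is not a unit
  have key : ∀ v : 𝓞 K, (-ζ ^ 8 + ζ ^ 6 - ζ ^ 4 + ζ) * v ≠ 1 := by
    intro v hv
    have hBy : (3 * ζ ^ 7 - 1) * (v ^ 6 * d) = 1 := by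
      linear_combination (v ^ 6 * d) * hc +
        (c * d * (((-ζ ^ 8 + ζ ^ 6 - ζ ^ 4 + ζ) * v) ^ 5 +
          ((-ζ ^ 8 + ζ ^ 6 - ζ ^ 4 + ζ) * v) ^ 4 + ((-ζ ^ 8 + ζ ^ 6 - ζ ^ 4 + ζ) * v) ^ 3 +
          ((-ζ ^ 8 + ζ ^ 6 - ζ ^ 4 + ζ) * v) ^ 2 + (-ζ ^ 8 + ζ ^ 6 - ζ ^ 4 + ζ) * v + 1)) * hv
        + hdc
    have hA : (7 : 𝓞 K) * (v ^ 6 * d) = 2 - 3 * ζ ^ 7 := by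
      linear_combination (2 - 3 * ζ ^ 7) * hBy + 9 * (v ^ 6 * d) * h14
    have hq7 : (7 : 𝓞 K) * (7 * (v ^ 6 * d) ^ 2 - v ^ 6 * d + 1) = 0 := by
      linear_combination (7 * (v ^ 6 * d) + (2 - 3 * ζ ^ 7) - 1) * hA + 9 * h14
    have hq0 : 7 * (v ^ 6 * d) ^ 2 - v ^ 6 * d + 1 = 0 := by
      rcases mul_eq_zero.mp hq7 with h | h
      · exact absurd h (by norm_num)
      · exact h
    -- pass to K and use integrality of y := (v^6*d : K)
    set y : K := algebraMap (𝓞 K) K (v ^ 6 * d) with hydef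
    have hy : 7 * y ^ 2 - y + 1 = 0 := by
      have := congrArg (algebraMap (𝓞 K) K) hq0
      simpa [hydef, map_add, map_sub, map_mul, map_pow, map_one, map_ofNat] using this
    have hyint : IsIntegral ℤ y := RingOfIntegers.isIntegral_coe (v ^ 6 * d)
    set p : Polynomial ℚ := Polynomial.X ^ 2 - Polynomial.C (1/7) * Polynomial.X +
      Polynomial.C (1/7) with hpdef
    have hpmonic : p.Monic := by rw [hpdef]; monicity!
    have hpdeg : p.natDegree = 2 := by rw [hpdef]; compute_degree!
    have hroot : Polynomial.aeval y p = 0 := by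
      rw [hpdef]
      simp only [map_add, map_sub, map_mul, map_pow, Polynomial.aeval_X, Polynomial.aeval_C]
      have h17 : (algebraMap ℚ K) (1/7) = 1/7 := by
        rw [map_div₀, map_one]; norm_num
      rw [h17]
      have h7K : (7 : K) ≠ 0 := by norm_num
      field_simp
      linear_combination hy
    have hirr : Irreducible p := by
      rw [Polynomial.irreducible_iff_roots_eq_zero_of_degree_le_three (by omega) (by omega)]
      rw [Multiset.eq_zero_iff_forall_notMem]
      intro r hr
      rw [Polynomial.mem_roots hpmonic.ne_zero] at hr
      have hev := hr
      rw [Polynomial.IsRoot, hpdef] at hev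
      simp only [Polynomial.eval_add, Polynomial.eval_sub, Polynomial.eval_mul,
        Polynomial.eval_pow, Polynomial.eval_X, Polynomial.eval_C] at hev
      nlinarith [sq_nonneg (r - 1/14)]
    have hmin : minpoly ℚ y = p := (minpoly.eq_of_irreducible_of_monic hirr hroot hpmonic).symm
    have heq := minpoly.isIntegrallyClosed_eq_field_fractions' ℚ hyint
    rw [hmin] at heq
    have hc0 := congrArg (fun f => Polynomial.coeff f 0) heq
    simp only [hpdef, Polynomial.coeff_map, Polynomial.coeff_add, Polynomial.coeff_sub,
      Polynomial.coeff_X_pow, Polynomial.coeff_C, Polynomial.coeff_C_mul,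
      Polynomial.coeff_X_zero] at hc0
    norm_num at hc0
    have h7n : (7 : ℚ) * ((minpoly ℤ y).coeff 0 : ℚ) = 1 := by
      field_simp at hc0; linarith
    have h7n' : (7 : ℤ) * (minpoly ℤ y).coeff 0 = 1 := by exact_mod_cast h7n
    omega
  refine ⟨⟨?_, ?_⟩, ?_, ?_⟩
  · rw [Ideal.span_singleton_pow, Ideal.mem_span_singleton]
    exact ⟨c ^ 2, by rw [hB2, hc]; ring⟩
  · rw [Ideal.span_singleton_pow, Ideal.mem_span_singleton]
    rintro ⟨e, he⟩
    have h12 : (-ζ ^ 8 + ζ ^ 6 - ζ ^ 4 + ζ) ^ 12 *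
        (c ^ 2 - (-ζ ^ 8 + ζ ^ 6 - ζ ^ 4 + ζ) * e) = 0 := by
      linear_combination (-(3 * ζ ^ 7 - 1 + (-ζ ^ 8 + ζ ^ 6 - ζ ^ 4 + ζ) ^ 6 * c)) * hc +
        9 * h14 + he
    have hcancel : c ^ 2 = (-ζ ^ 8 + ζ ^ 6 - ζ ^ 4 + ζ) * e := by
      rcases mul_eq_zero.mp h12 with h | h
      · exact absurd (pow_eq_zero_iff (by norm_num : (12 : ℕ) ≠ 0) |>.mp h) hπne
      · exact sub_eq_zero.mp h
    exact key (e * d ^ 2) (by linear_combination (c * d + 1) * hdc - d ^ 2 * hcancel)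
  · rw [Ideal.span_singleton_pow, Ideal.mem_span_singleton]
    exact ⟨c, hc⟩
  · rw [Ideal.span_singleton_pow, Ideal.mem_span_singleton]
    rintro ⟨e, he⟩
    have h6 : (-ζ ^ 8 + ζ ^ 6 - ζ ^ 4 + ζ) ^ 6 *
        (c - (-ζ ^ 8 + ζ ^ 6 - ζ ^ 4 + ζ) * e) = 0 := by
      linear_combination (-1 : 𝓞 K) * hc + he
    have hcancel : c = (-ζ ^ 8 + ζ ^ 6 - ζ ^ 4 + ζ) * e := by
      rcases mul_eq_zero.mp h6 with h | h
      · exact absurd (pow_eq_zero_iff (by norm_num : (6 : ℕ) ≠ 0) |>.mp h) hπne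
      · exact sub_eq_zero.mp h
    exact key (e * d) (by linear_combination hdc - d * hcancel)
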